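/- Let (Z_n) be a Markov chain on a standard Borel space M with Markov operator P and stationary probability measure π. Let f be a bounded measurable function on M and suppose there exists a bounded measurable function φ with φ - Pφ = f - ∫f dπ. Then for every t > 0, n ∈ ℕ and starting point x ∈ M, P_x( |Σ_{i=1}^n f(Z_i) - n∫f dπ| ≥ nt ) ≤ 2 exp(-n t² / (32 ‖φ‖_∞²)). -/

import Mathlib

open MeasureTheory ProbabilityTheory


lemma exp_le_cosh_add {c d l : ℝ} (hc : 0 < c) (hd : |d| ≤ c) :
    Real.exp (l * d) ≤ Real.cosh (l * c) + (d / c) * Real.sinh (l * c) := by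
  have h1 : -c ≤ d := neg_le_of_abs_le hd
  have h2 : d ≤ c := le_of_abs_le hd
  have ha : (0:ℝ) ≤ (c - d)/(2*c) := div_nonneg (by linarith) (by linarith)
  have hb : (0:ℝ) ≤ (c + d)/(2*c) := div_nonneg (by linarith) (by linarith)
  have hab : (c - d)/(2*c) + (c + d)/(2*c) = 1 := by field_simp; ring
  have key := convexOn_exp.2 (Set.mem_univ (-(l*c))) (Set.mem_univ (l*c)) ha hb hab
  simp only [smul_eq_mul] at key
  have harg : (c - d)/(2*c) * (-(l*c)) + (c + d)/(2*c) * (l*c) = l * d := by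
    field_simp; ring
  rw [harg] at key
  refine key.trans (le_of_eq ?_)
  rw [Real.cosh_eq, Real.sinh_eq]
  field_simp
  ring

lemma integrable_of_abs_le {Ω : Type*} [MeasurableSpace Ω] {μ : Measure Ω} [IsFiniteMeasure μ]
    {g : Ω → ℝ} (hg : AEStronglyMeasurable g μ) {C : ℝ} (h : ∀ ω, |g ω| ≤ C) :
    Integrable g μ :=
  ⟨hg, HasFiniteIntegral.of_bounded (C := C) (ae_of_all _ (by simpa [Real.norm_eq_abs] using h))⟩

lemma mgf_bound_aux
    {M : Type*} [MeasurableSpace M]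
    (P : Kernel M M) [IsMarkovKernel P]
    (φ : M → ℝ) (hφ : Measurable φ) (Cφ : ℝ) (hCφ : 0 < Cφ) (hφb : ∀ y, |φ y| ≤ Cφ)
    {Ω : Type*} {mΩ : MeasurableSpace Ω} (Pr : Measure Ω) [IsProbabilityMeasure Pr]
    (ℱ : Filtration ℕ mΩ) (Z : ℕ → Ω → M)
    (hadapted : ∀ n, Measurable[ℱ n] (Z n))
    (hMarkov : ∀ (n : ℕ) (g : M → ℝ), Measurable g → (∃ C, ∀ y, |g y| ≤ C) →
      (fun ω => ∫ z, g z ∂(P (Z n ω))) =ᵐ[Pr] Pr[fun ω => g (Z (n + 1) ω)|ℱ n])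
    (l : ℝ) (k : ℕ) :
    ∫ ω, Real.exp (l * ∑ i ∈ Finset.range k,
        (φ (Z (i+2) ω) - ∫ z, φ z ∂(P (Z (i+1) ω)))) ∂Pr
      ≤ (Real.cosh (l * (2*Cφ)))^k := by
  -- abbreviations
  set c : ℕ → Ω → ℝ := fun m ω => ∫ z, φ z ∂(P (Z m ω)) with hc
  set W : ℕ → Ω → ℝ := fun m ω => ∑ i ∈ Finset.range m, (φ (Z (i+2) ω) - c (i+1) ω) with hW
  have hPφm : Measurable fun y => ∫ z, φ z ∂(P y) :=
    (MeasureTheory.StronglyMeasurable.integral_kernel_prod_right' (κ := P)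
      (hφ.stronglyMeasurable.comp_measurable measurable_snd)).measurable
  have hPφb : ∀ y, |∫ z, φ z ∂(P y)| ≤ Cφ := by
    intro y
    have := norm_integral_le_of_norm_le_const (μ := P y) (C := Cφ)
      (ae_of_all _ fun z => by rw [Real.norm_eq_abs]; exact hφb z)
    simpa [Real.norm_eq_abs, measure_univ] using this
  have hcm : ∀ m, Measurable[ℱ m] (c m) := fun m => hPφm.comp (hadapted m)
  have hDb : ∀ i ω, |φ (Z (i+2) ω) - c (i+1) ω| ≤ 2*Cφ := by
    intro i ω
    have h1 := abs_le.1 (hφb (Z (i+2) ω))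
    have h2 := abs_le.1 (hPφb (Z (i+1) ω))
    rw [abs_le]
    constructor <;> simp only [hc] <;> [linarith [h1.1, h2.2]; linarith [h1.2, h2.1]]
  have hWm : ∀ m, Measurable[ℱ (m+1)] (W m) := by
    intro m
    apply Finset.measurable_sum
    intro i hi
    have hik : i + 2 ≤ m + 1 := by
      have := Finset.mem_range.1 hi; omega
    exact ((hφ.comp (hadapted (i+2))).mono (ℱ.mono hik) le_rfl).sub
      ((hcm (i+1)).mono (ℱ.mono (by omega)) le_rfl)
  have hWm' : ∀ m, Measurable (W m) := fun m => (hWm m).mono (ℱ.le (m+1)) le_rfl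
  have hWb : ∀ m ω, |W m ω| ≤ m * (2*Cφ) := by
    intro m ω
    calc |W m ω| ≤ ∑ i ∈ Finset.range m, |φ (Z (i+2) ω) - c (i+1) ω| :=
          Finset.abs_sum_le_sum_abs _ _
      _ ≤ ∑ _i ∈ Finset.range m, (2*Cφ) := Finset.sum_le_sum fun i _ => hDb i ω
      _ = m * (2*Cφ) := by simp [mul_comm]
  have hexpb : ∀ m ω, |Real.exp (l * W m ω)| ≤ Real.exp (|l| * (m * (2*Cφ))) := by
    intro m ω
    rw [Real.abs_exp, Real.exp_le_exp]
    exact (le_abs_self _).trans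
      (by rw [abs_mul]; exact mul_le_mul_of_nonneg_left (hWb m ω) (abs_nonneg l))
  have hexpint : ∀ m, Integrable (fun ω => Real.exp (l * W m ω)) Pr := fun m =>
    integrable_of_abs_le
      ((Real.measurable_exp.comp ((hWm' m).const_mul l)).aestronglyMeasurable) (hexpb m)
  -- goal as statement about W
  show ∫ ω, Real.exp (l * W k ω) ∂Pr ≤ (Real.cosh (l * (2*Cφ)))^k
  induction k with
  | zero => simp [hW]
  | succ k ih =>
    set A := Real.cosh (l * (2*Cφ)) with hA
    set B := Real.sinh (l * (2*Cφ)) / (2*Cφ) with hB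
    have hApos : 0 < A := by rw [hA]; exact Real.cosh_pos _
    -- increment
    set D : Ω → ℝ := fun ω => φ (Z (k+2) ω) - c (k+1) ω with hD
    have hDm : Measurable D :=
      (hφ.comp ((hadapted (k+2)).mono (ℱ.le (k+2)) le_rfl)).sub
        ((hcm (k+1)).mono (ℱ.le (k+1)) le_rfl)
    have hexpDint : Integrable (fun ω => Real.exp (l * W k ω) * D ω) Pr := by
      refine integrable_of_abs_le
        (((Real.measurable_exp.comp ((hWm' k).const_mul l)).mul hDm).aestronglyMeasurable)
        (C := Real.exp (|l| * (k * (2*Cφ))) * (2*Cφ)) (fun ω => ?_)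
      rw [abs_mul]
      exact mul_le_mul (hexpb k ω) (hDb k ω) (abs_nonneg _) (Real.exp_pos _).le
    -- orthogonality
    have horth : ∫ ω, Real.exp (l * W k ω) * D ω ∂Pr = 0 := by
      have hmark := hMarkov (k+1) φ hφ ⟨Cφ, hφb⟩
      have hφZint : Integrable (fun ω => φ (Z (k+2) ω)) Pr :=
        integrable_of_abs_le
          ((hφ.comp ((hadapted (k+2)).mono (ℱ.le (k+2)) le_rfl)).aestronglyMeasurable)
          (fun ω => hφb _)
      have hhm : StronglyMeasurable[ℱ (k+1)] (fun ω => Real.exp (l * W k ω)) :=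
        (Real.measurable_exp.comp ((hWm k).const_mul l)).stronglyMeasurable
      have hpull := condExp_stronglyMeasurable_mul_of_bound (ℱ.le (k+1)) (μ := Pr) hhm hφZint
        (Real.exp (|l| * (k * (2*Cφ))))
        (ae_of_all _ fun ω => by simpa [Real.norm_eq_abs] using hexpb k ω)
      have hprod_int : Integrable (fun ω => Real.exp (l * W k ω) * φ (Z (k+2) ω)) Pr := by
        refine integrable_of_abs_le
          (((Real.measurable_exp.comp ((hWm' k).const_mul l)).mul
            (hφ.comp ((hadapted (k+2)).mono (ℱ.le (k+2)) le_rfl))).aestronglyMeasurable)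
          (C := Real.exp (|l| * (k * (2*Cφ))) * Cφ) (fun ω => ?_)
        rw [abs_mul]
        exact mul_le_mul (hexpb k ω) (hφb _) (abs_nonneg _) (Real.exp_pos _).le
      have hprod_int2 : Integrable (fun ω => Real.exp (l * W k ω) * c (k+1) ω) Pr := by
        refine integrable_of_abs_le
          (((Real.measurable_exp.comp ((hWm' k).const_mul l)).mul
            ((hcm (k+1)).mono (ℱ.le (k+1)) le_rfl)).aestronglyMeasurable)
          (C := Real.exp (|l| * (k * (2*Cφ))) * Cφ) (fun ω => ?_)
        rw [abs_mul]
        exact mul_le_mul (hexpb k ω) (hPφb _) (abs_nonneg _) (Real.exp_pos _).le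
      have key1 : ∫ ω, Real.exp (l * W k ω) * φ (Z (k+2) ω) ∂Pr
          = ∫ ω, Real.exp (l * W k ω) * c (k+1) ω ∂Pr := by
        calc ∫ ω, Real.exp (l * W k ω) * φ (Z (k+2) ω) ∂Pr
            = ∫ ω, (Pr[(fun ω => Real.exp (l * W k ω)) * (fun ω => φ (Z (k+2) ω))|ℱ (k+1)]) ω ∂Pr := by
              rw [integral_condExp (ℱ.le (k+1))]; rfl
          _ = ∫ ω, ((fun ω => Real.exp (l * W k ω)) * Pr[(fun ω => φ (Z (k+2) ω))|ℱ (k+1)]) ω ∂Pr :=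
              integral_congr_ae hpull
          _ = ∫ ω, Real.exp (l * W k ω) * c (k+1) ω ∂Pr := by
              refine integral_congr_ae ?_
              filter_upwards [hmark] with ω hω
              simp only [Pi.mul_apply]
              rw [← hω]
      have : ∫ ω, Real.exp (l * W k ω) * D ω ∂Pr
          = (∫ ω, Real.exp (l * W k ω) * φ (Z (k+2) ω) ∂Pr)
            - ∫ ω, Real.exp (l * W k ω) * c (k+1) ω ∂Pr := by
        rw [← integral_sub hprod_int hprod_int2]
        congr 1; funext ω; simp only [hD]; ring
      rw [this, key1, sub_self]
    -- main estimate
    have hstep : ∫ ω, Real.exp (l * W (k+1) ω) ∂Pr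
        ≤ ∫ ω, (A * Real.exp (l * W k ω) + B * (Real.exp (l * W k ω) * D ω)) ∂Pr := by
      refine integral_mono (hexpint (k+1))
        (((hexpint k).const_mul A).add (hexpDint.const_mul B)) (fun ω => ?_)
      have hWsucc : W (k+1) ω = W k ω + D ω := by
        simp only [hW, hD, hc, Finset.sum_range_succ]
      have hcvx := exp_le_cosh_add (c := 2*Cφ) (d := D ω) (l := l) (by linarith) (hDb k ω)
      calc Real.exp (l * W (k+1) ω) = Real.exp (l * W k ω) * Real.exp (l * D ω) := by
            rw [hWsucc, mul_add, Real.exp_add]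
        _ ≤ Real.exp (l * W k ω) * (A + D ω / (2*Cφ) * B * (2*Cφ)) := by
            refine mul_le_mul_of_nonneg_left ?_ (Real.exp_pos _).le
            rw [hB]
            have h2 : D ω / (2*Cφ) * (Real.sinh (l * (2*Cφ)) / (2*Cφ)) * (2*Cφ)
                = D ω / (2*Cφ) * Real.sinh (l * (2*Cφ)) := by
              field_simp
            rw [h2]; exact hcvx
        _ = A * Real.exp (l * W k ω) + B * (Real.exp (l * W k ω) * D ω) := by
            field_simp
    calc ∫ ω, Real.exp (l * W (k+1) ω) ∂Pr
        ≤ ∫ ω, (A * Real.exp (l * W k ω) + B * (Real.exp (l * W k ω) * D ω)) ∂Pr := hstep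
      _ = A * (∫ ω, Real.exp (l * W k ω) ∂Pr)
          + B * ∫ ω, Real.exp (l * W k ω) * D ω ∂Pr := by
          rw [integral_add ((hexpint k).const_mul A) (hexpDint.const_mul B),
            integral_const_mul, integral_const_mul]
      _ = A * ∫ ω, Real.exp (l * W k ω) ∂Pr := by rw [horth, mul_zero, add_zero]
      _ ≤ A * A^k := mul_le_mul_of_nonneg_left ih hApos.le
      _ = A^(k+1) := by rw [pow_succ, mul_comm]


lemma sum_Icc_one_eq_sum_range {G : Type*} [AddCommMonoid G] (g : ℕ → G) (n : ℕ) :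
    ∑ i ∈ Finset.Icc 1 n, g i = ∑ i ∈ Finset.range n, g (i+1) := by
  induction n with
  | zero => simp
  | succ n ih => rw [Finset.sum_Icc_succ_top (by omega), ih, Finset.sum_range_succ]


/-- Let `(Z_n)` be a Markov chain on a standard Borel space `M` with Markov
operator (kernel) `P` and `P`-stationary probability measure `π`, started at `x`. Let `f` be
a bounded measurable function and `φ` a bounded measurable solution of the Poisson equation
`φ - Pφ = f - ∫ f dπ` with `‖φ‖_∞ ≤ Cφ`. Then for every `t > 0` and `n`,
`P_x(|Σ_{i=1}^n f(Z_i) - n ∫ f dπ| ≥ n t) ≤ 2 exp(- n t² / (32 Cφ²))`. -/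
theorem markov_chain_concentration
    {M : Type*} [MeasurableSpace M] [StandardBorelSpace M]
    (P : Kernel M M) [IsMarkovKernel P]
    (π : Measure M) [IsProbabilityMeasure π] (hπ : π.bind (fun y => P y) = π)
    (f : M → ℝ) (hf : Measurable f) (Cf : ℝ) (hfb : ∀ y, |f y| ≤ Cf)
    (φ : M → ℝ) (hφ : Measurable φ) (Cφ : ℝ) (hφb : ∀ y, |φ y| ≤ Cφ)
    (hPoisson : ∀ y, φ y - ∫ z, φ z ∂(P y) = f y - ∫ z, f z ∂π)
    {Ω : Type*} {mΩ : MeasurableSpace Ω} (Pr : Measure Ω) [IsProbabilityMeasure Pr]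
    (ℱ : Filtration ℕ mΩ) (Z : ℕ → Ω → M) (x : M)
    (hZ0 : ∀ ω, Z 0 ω = x)
    (hadapted : ∀ n, Measurable[ℱ n] (Z n))
    (hMarkov : ∀ (n : ℕ) (g : M → ℝ), Measurable g → (∃ C, ∀ y, |g y| ≤ C) →
      (fun ω => ∫ z, g z ∂(P (Z n ω))) =ᵐ[Pr] Pr[fun ω => g (Z (n + 1) ω)|ℱ n])
    (t : ℝ) (ht : 0 < t) (n : ℕ) :
    Pr {ω | (n : ℝ) * t ≤ |(∑ i ∈ Finset.Icc 1 n, f (Z i ω)) - n * ∫ z, f z ∂π|} ≤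
      ENNReal.ofReal (2 * Real.exp (-((n : ℝ) * t ^ 2) / (32 * Cφ ^ 2))) := by

  classical
  have hZm : ∀ k, Measurable (Z k) := fun k => (hadapted k).mono (ℱ.le k) le_rfl
  have hCφ0 : 0 ≤ Cφ := (abs_nonneg _).trans (hφb x)
  have hPφb : ∀ y, |∫ z, φ z ∂(P y)| ≤ Cφ := by
    intro y
    have := norm_integral_le_of_norm_le_const (μ := P y) (C := Cφ)
      (ae_of_all _ fun z => by rw [Real.norm_eq_abs]; exact hφb z)
    simpa [Real.norm_eq_abs, measure_univ] using this
  have hfI : ∀ y, |f y - ∫ z, f z ∂π| ≤ 2*Cφ := by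
    intro y
    rw [← hPoisson y]
    have h1 := abs_le.1 (hφb y)
    have h2 := abs_le.1 (hPφb y)
    rw [abs_le]; constructor <;> linarith [h1.1, h1.2, h2.1, h2.2]
  have hsum : ∀ ω, (∑ i ∈ Finset.Icc 1 n, f (Z i ω)) - n * ∫ z, f z ∂π
      = ∑ i ∈ Finset.Icc 1 n, (f (Z i ω) - ∫ z, f z ∂π) := by
    intro ω
    rw [Finset.sum_sub_distrib, Finset.sum_const, Nat.card_Icc]
    simp [nsmul_eq_mul]
  rcases Nat.eq_zero_or_pos n with hn0 | hn0
  · subst hn0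
    refine le_trans prob_le_one ?_
    simp only [Nat.cast_zero, zero_mul, neg_zero, zero_div, Real.exp_zero, mul_one]
    exact ENNReal.one_le_ofReal.mpr one_le_two
  by_cases hbigt : 2*Cφ < t
  · have hempty : Pr {ω | (n : ℝ) * t ≤ |(∑ i ∈ Finset.Icc 1 n, f (Z i ω)) - n * ∫ z, f z ∂π|}
        = 0 := by
      convert measure_empty (μ := Pr)
      ext ω
      simp only [Set.mem_setOf_eq, Set.mem_empty_iff_false, iff_false, not_le]
      have hnpos : (0:ℝ) < n := by exact_mod_cast hn0
      calc |(∑ i ∈ Finset.Icc 1 n, f (Z i ω)) - n * ∫ z, f z ∂π|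
          = |∑ i ∈ Finset.Icc 1 n, (f (Z i ω) - ∫ z, f z ∂π)| := by rw [hsum]
        _ ≤ ∑ i ∈ Finset.Icc 1 n, |f (Z i ω) - ∫ z, f z ∂π| := Finset.abs_sum_le_sum_abs _ _
        _ ≤ ∑ _i ∈ Finset.Icc 1 n, (2*Cφ) := Finset.sum_le_sum fun i _ => hfI _
        _ = n * (2*Cφ) := by simp [Nat.card_Icc, mul_comm]
        _ < n * t := by nlinarith
    rw [hempty]; exact zero_le
  push_neg at hbigt
  have hCφpos : 0 < Cφ := by linarith
  by_cases hsmall : (n:ℝ)*t < 4*Cφ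
  · refine le_trans prob_le_one ?_
    refine ENNReal.one_le_ofReal.mpr ?_
    have hn0' : (0:ℝ) ≤ n := Nat.cast_nonneg n
    have hx : ((n:ℝ)*t^2)/(32*Cφ^2) ≤ 1/4 := by
      rw [div_le_iff₀ (by positivity)]
      nlinarith [mul_le_mul_of_nonneg_right hsmall.le ht.le,
        mul_le_mul_of_nonneg_left hbigt (by positivity : (0:ℝ) ≤ 4*Cφ)]
    have h4 : Real.exp (1/4 : ℝ) ≤ 2 := by
      have h14 : Real.exp (1/4 : ℝ)^4 = Real.exp 1 := by
        rw [← Real.exp_nat_mul]; norm_num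
      refine le_of_pow_le_pow_left₀ (n := 4) (by norm_num) (by norm_num) ?_
      rw [h14]; have := Real.exp_one_lt_d9; norm_num; linarith
    have hexp : (1:ℝ)/2 ≤ Real.exp (-((n:ℝ)*t^2)/(32*Cφ^2)) := by
      have h5 : (1:ℝ)/2 ≤ Real.exp (-(1/4 : ℝ)) := by
        rw [Real.exp_neg]
        rw [le_inv_comm₀ (by norm_num) (Real.exp_pos _)]
        linarith
      refine h5.trans (Real.exp_le_exp.mpr ?_)
      rw [neg_div]; linarith
    linarith
  push_neg at hsmall
  have hPφm : Measurable fun y => ∫ z, φ z ∂(P y) :=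
    (MeasureTheory.StronglyMeasurable.integral_kernel_prod_right' (κ := P)
      (hφ.stronglyMeasurable.comp_measurable measurable_snd)).measurable
  have hCφne : Cφ ≠ 0 := ne_of_gt hCφpos
  set S : Ω → ℝ :=
    fun ω => ∑ i ∈ Finset.range n, (φ (Z (i+2) ω) - ∫ z, φ z ∂(P (Z (i+1) ω))) with hSdef
  have hkey : ∀ l : ℝ, ∫ ω, Real.exp (l * S ω) ∂Pr ≤ (Real.cosh (l*(2*Cφ)))^n :=
    fun l => mgf_bound_aux P φ hφ Cφ hCφpos hφb Pr ℱ Z hadapted hMarkov l n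
  have hSm : Measurable S :=
    Finset.measurable_sum _ fun i _ => (hφ.comp (hZm (i+2))).sub (hPφm.comp (hZm (i+1)))
  have hDb : ∀ (i : ℕ) ω, |φ (Z (i+2) ω) - ∫ z, φ z ∂(P (Z (i+1) ω))| ≤ 2*Cφ := by
    intro i ω
    have h1 := abs_le.1 (hφb (Z (i+2) ω)); have h2 := abs_le.1 (hPφb (Z (i+1) ω))
    rw [abs_le]; constructor <;> linarith [h1.1, h1.2, h2.1, h2.2]
  have hSb : ∀ ω, |S ω| ≤ n*(2*Cφ) := by
    intro ω
    calc |S ω| ≤ ∑ i ∈ Finset.range n, |φ (Z (i+2) ω) - ∫ z, φ z ∂(P (Z (i+1) ω))| :=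
        Finset.abs_sum_le_sum_abs _ _
      _ ≤ ∑ _i ∈ Finset.range n, (2*Cφ) := Finset.sum_le_sum fun i _ => hDb i ω
      _ = n*(2*Cφ) := by simp [mul_comm]
  have hexpint : ∀ l : ℝ, Integrable (fun ω => Real.exp (l * S ω)) Pr := by
    intro l
    refine integrable_of_abs_le ((Real.measurable_exp.comp (hSm.const_mul l)).aestronglyMeasurable)
      (C := Real.exp (|l| * (n*(2*Cφ)))) (fun ω => ?_)
    rw [Real.abs_exp, Real.exp_le_exp]
    exact (le_abs_self _).trans
      (by rw [abs_mul]; exact mul_le_mul_of_nonneg_left (hSb ω) (abs_nonneg l))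
  have htel : ∀ ω, ∑ i ∈ Finset.range n, (φ (Z (i+1) ω) - φ (Z (i+2) ω))
      = φ (Z 1 ω) - φ (Z (n+1) ω) := by
    intro ω
    have := Finset.sum_range_sub' (f := fun j => φ (Z (j+1) ω)) (n := n)
    simpa using this
  have hdecomp : ∀ ω, (∑ i ∈ Finset.Icc 1 n, f (Z i ω)) - n * ∫ z, f z ∂π
      = φ (Z 1 ω) - φ (Z (n+1) ω) + S ω := by
    intro ω
    rw [hsum ω]
    calc ∑ i ∈ Finset.Icc 1 n, (f (Z i ω) - ∫ z, f z ∂π)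
        = ∑ i ∈ Finset.Icc 1 n, (φ (Z i ω) - ∫ z, φ z ∂(P (Z i ω))) :=
          Finset.sum_congr rfl fun i _ => (hPoisson (Z i ω)).symm
      _ = ∑ i ∈ Finset.range n, (φ (Z (i+1) ω) - ∫ z, φ z ∂(P (Z (i+1) ω))) :=
          sum_Icc_one_eq_sum_range _ n
      _ = ∑ i ∈ Finset.range n, ((φ (Z (i+1) ω) - φ (Z (i+2) ω))
            + (φ (Z (i+2) ω) - ∫ z, φ z ∂(P (Z (i+1) ω)))) :=
          Finset.sum_congr rfl fun i _ => by ring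
      _ = (∑ i ∈ Finset.range n, (φ (Z (i+1) ω) - φ (Z (i+2) ω))) + S ω := by
          rw [Finset.sum_add_distrib]
      _ = φ (Z 1 ω) - φ (Z (n+1) ω) + S ω := by rw [htel ω]
  set s : ℝ := (n:ℝ)*t/2 with hsdef
  have hsub : {ω | (n : ℝ) * t ≤ |(∑ i ∈ Finset.Icc 1 n, f (Z i ω)) - n * ∫ z, f z ∂π|}
      ⊆ {ω | s ≤ S ω} ∪ {ω | S ω ≤ -s} := by
    intro ω hω
    simp only [Set.mem_setOf_eq] at hω
    rw [hdecomp ω] at hω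
    have hedge : |φ (Z 1 ω) - φ (Z (n+1) ω)| ≤ 2*Cφ := by
      have h1 := abs_le.1 (hφb (Z 1 ω)); have h2 := abs_le.1 (hφb (Z (n+1) ω))
      rw [abs_le]; constructor <;> linarith [h1.1, h1.2, h2.1, h2.2]
    have habs := abs_add_le (φ (Z 1 ω) - φ (Z (n+1) ω)) (S ω)
    have h3 : s ≤ |S ω| := by
      rw [hsdef]; linarith [hsmall]
    rcases le_abs.1 h3 with h | h
    · exact Or.inl h
    · exact Or.inr (by simp only [Set.mem_setOf_eq]; linarith)
  refine le_trans (measure_mono hsub) (le_trans (measure_union_le _ _) ?_)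
  set l0 : ℝ := t/(8*Cφ^2) with hl0def
  have hl0 : 0 ≤ l0 := by rw [hl0def]; positivity
  have hche : Real.exp (-(l0 * s)) * (Real.cosh (l0*(2*Cφ)))^n
      ≤ Real.exp (-((n:ℝ)*t^2) / (32*Cφ^2)) := by
    have hcosh := Real.cosh_le_exp_half_sq (l0*(2*Cφ))
    calc Real.exp (-(l0*s)) * (Real.cosh (l0*(2*Cφ)))^n
        ≤ Real.exp (-(l0*s)) * (Real.exp ((l0*(2*Cφ))^2/2))^n :=
          mul_le_mul_of_nonneg_left (pow_le_pow_left₀ (Real.cosh_pos _).le hcosh n)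
            (Real.exp_pos _).le
      _ = Real.exp (-(l0*s) + n*((l0*(2*Cφ))^2/2)) := by
          rw [← Real.exp_nat_mul, ← Real.exp_add]
      _ ≤ Real.exp (-((n:ℝ)*t^2) / (32*Cφ^2)) := by
          have heq : -(l0*s) + (n:ℝ)*((l0*(2*Cφ))^2/2) = -((n:ℝ)*t^2) / (32*Cφ^2) := by
            rw [hl0def, hsdef]; field_simp; ring
          rw [heq]
  have htoReal : ∀ (A : Set Ω), (Pr A).toReal ≤ Real.exp (-((n:ℝ)*t^2)/(32*Cφ^2)) →
      Pr A ≤ ENNReal.ofReal (Real.exp (-((n:ℝ)*t^2)/(32*Cφ^2))) := by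
    intro A h
    rw [← ENNReal.ofReal_toReal (measure_ne_top Pr A)]
    exact ENNReal.ofReal_le_ofReal h
  have htail1 : Pr {ω | s ≤ S ω} ≤ ENNReal.ofReal (Real.exp (-((n:ℝ)*t^2)/(32*Cφ^2))) := by
    refine htoReal _ ?_
    have h := measure_ge_le_exp_mul_mgf (μ := Pr) (X := S) s hl0 (hexpint l0)
    refine h.trans ?_
    have hm : mgf S Pr l0 ≤ (Real.cosh (l0*(2*Cφ)))^n := hkey l0
    calc Real.exp (-l0 * s) * mgf S Pr l0
        ≤ Real.exp (-l0 * s) * (Real.cosh (l0*(2*Cφ)))^n :=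
          mul_le_mul_of_nonneg_left hm (Real.exp_pos _).le
      _ ≤ _ := by rw [neg_mul]; exact hche
  have htail2 : Pr {ω | S ω ≤ -s} ≤ ENNReal.ofReal (Real.exp (-((n:ℝ)*t^2)/(32*Cφ^2))) := by
    refine htoReal _ ?_
    have h := measure_le_le_exp_mul_mgf (μ := Pr) (X := S) (t := -l0) (-s)
      (by linarith) (hexpint (-l0))
    refine h.trans ?_
    have hm : mgf S Pr (-l0) ≤ (Real.cosh (l0*(2*Cφ)))^n := by
      have h' := hkey (-l0)
      rwa [show (-l0)*(2*Cφ) = -(l0*(2*Cφ)) by ring, Real.cosh_neg] at h'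
    calc Real.exp (-(-l0) * (-s)) * mgf S Pr (-l0)
        ≤ Real.exp (-(-l0) * (-s)) * (Real.cosh (l0*(2*Cφ)))^n :=
          mul_le_mul_of_nonneg_left hm (Real.exp_pos _).le
      _ ≤ _ := by rw [show -(-l0) * (-s) = -(l0*s) by ring]; exact hche
  calc Pr {ω | s ≤ S ω} + Pr {ω | S ω ≤ -s}
      ≤ ENNReal.ofReal (Real.exp (-((n:ℝ)*t^2)/(32*Cφ^2)))
        + ENNReal.ofReal (Real.exp (-((n:ℝ)*t^2)/(32*Cφ^2))) := add_le_add htail1 htail2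
    _ = ENNReal.ofReal (2 * Real.exp (-((n:ℝ)*t^2)/(32*Cφ^2))) := by
        rw [← ENNReal.ofReal_add (Real.exp_pos _).le (Real.exp_pos _).le, two_mul]
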